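/- Let Σ be a unimodular fan in N_ℝ. The pairing A^k(Σ) ⊗ MW_k(Σ) → ℤ sending x_σ ⊗ w to w(σ) for each σ ∈ Σ_k is well-defined and induces an isomorphism MW_k(Σ) ≅ Hom(A^k(Σ), ℤ). -/

import Mathlib

open scoped DirectSum NNReal

abbrev NZ (n : ℕ) := Fin n → ℤ
abbrev NR (n : ℕ) := Fin n → ℝ

/-- The canonical map from the lattice `ℤⁿ` into `ℝⁿ`. -/
def latt {n : ℕ} (v : NZ n) : NR n := fun j => (v j : ℝ)

/-- A unimodular (rational, simplicial) fan, encoded combinatorially: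
rays are indexed by `R` with primitive generators `e r` in the lattice `ℤⁿ`,
and cones correspond to those finite sets of rays belonging to `faces`. -/
structure UFan (n : ℕ) where
  R : Type
  fintypeR : Fintype R
  deceqR : DecidableEq R
  e : R → NZ n
  faces : Finset (Finset R)
  empty_mem : ∅ ∈ faces
  down_closed : ∀ S ∈ faces, ∀ T ⊆ S, T ∈ faces
  /-- the primitive generators of the rays of every cone extend to a
  `ℤ`-basis of the lattice -/
  unimodular : ∀ S ∈ faces, ∃ b : Module.Basis (Fin n) ℤ (NZ n), ∃ f : {r // r ∈ S} → Fin n,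
      Function.Injective f ∧ ∀ r : {r // r ∈ S}, b (f r) = e r
  /-- the geometric cones of the family intersect along common faces -/
  isFan : ∀ S ∈ faces, ∀ T ∈ faces,
      (Submodule.span ℝ≥0 (latt '' (e '' (S : Set R))) ⊓
        Submodule.span ℝ≥0 (latt '' (e '' (T : Set R))))
        = Submodule.span ℝ≥0 (latt '' (e '' ((S ∩ T : Finset R) : Set R)))

attribute [instance] UFan.fintypeR UFan.deceqR

namespace UFan

variable {n : ℕ} (Φ : UFan n)

/-- The sublattice `N_σ` generated by the rays of a cone `σ`. -/
def Nsub (S : Finset Φ.R) : Submodule ℤ (NZ n) :=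
  Submodule.span ℤ (Φ.e '' (S : Set Φ.R))

/-- The quotient lattice `N^τ = N / N_τ`. -/
abbrev Q (T : Finset Φ.R) := NZ n ⧸ Φ.Nsub T

/-- The projection `N → N^τ`. -/
def qmap (T : Finset Φ.R) : NZ n →ₗ[ℤ] Φ.Q T := (Φ.Nsub T).mkQ

lemma Nsub_mono {T T' : Finset Φ.R} (h : T ⊆ T') : Φ.Nsub T ≤ Φ.Nsub T' :=
  Submodule.span_mono (Set.image_mono (Finset.coe_subset.2 h))

/-- The projection `N^τ → N^τ'` for `τ ⊆ τ'`. -/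
def proj {T T' : Finset Φ.R} (h : T ⊆ T') : Φ.Q T →ₗ[ℤ] Φ.Q T' :=
  Submodule.mapQ _ _ LinearMap.id
    (by simpa using Φ.Nsub_mono h)

/-- The map on exterior algebras induced by the projection `N^τ → N^τ'`. -/
def emap {T T' : Finset Φ.R} (h : T ⊆ T') :
    ExteriorAlgebra ℤ (Φ.Q T) →ₗ[ℤ] ExteriorAlgebra ℤ (Φ.Q T') :=
  (ExteriorAlgebra.map (Φ.proj h)).toLinearMap

/-- The multi-tangent space `F_p(□_σ^τ)`: the sum over cones `η ⊇ σ` of the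
images of `⋀^p N_η` inside the exterior algebra of `N^τ`. -/
def Fmod (p : ℕ) (T S : Finset Φ.R) : Submodule ℤ (ExteriorAlgebra ℤ (Φ.Q T)) :=
  ⨆ (S' : Finset Φ.R) (_ : S' ∈ Φ.faces) (_ : S ⊆ S'),
    Submodule.map (ExteriorAlgebra.map ((Φ.qmap T).comp (Φ.Nsub S').subtype)).toLinearMap
      (⋀[ℤ]^p ↥(Φ.Nsub S'))

/-- Faces `□_σ^τ` of dimension `q` of the canonical compactification, encoded as
pairs `(τ, σ)` of cones with `τ ⊆ σ` and `dim σ - dim τ = q`. -/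
def FaceIdx (q : ℕ) :=
  {TS : Finset Φ.R × Finset Φ.R //
    TS.1 ⊆ TS.2 ∧ TS.2 ∈ Φ.faces ∧ TS.2.card = TS.1.card + q}

instance (q : ℕ) : Fintype (Φ.FaceIdx q) := by
  unfold FaceIdx; infer_instance

instance (q : ℕ) : DecidableEq (Φ.FaceIdx q) := by
  unfold FaceIdx; infer_instance

/-- `γ` is a codimension-one face of `δ` in the canonical compactification. -/
def Adj {q : ℕ} (γ : Φ.FaceIdx q) (δ : Φ.FaceIdx (q + 1)) : Prop :=
  δ.1.1 ⊆ γ.1.1 ∧ γ.1.2 ⊆ δ.1.2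

instance {q : ℕ} (γ : Φ.FaceIdx q) (δ : Φ.FaceIdx (q + 1)) : Decidable (Φ.Adj γ δ) := by
  unfold Adj; infer_instance

/-- The cellular chain group `C_{p,q}` of the canonical compactification. -/
abbrev Cch (p q : ℕ) := ⨁ δ : Φ.FaceIdx q, ↥(Φ.Fmod p δ.1.1 δ.1.2)

end UFan

/-- Auxiliary data for the tropical (co)chain complexes of the canonical
compactification: a system of incidence signs coming from a choice of cellular
orientation, together with the component maps `F_p(δ) → F_p(γ)` (projection
followed by inclusion), characterized inside the ambient exterior algebras. -/
structure TropData {n : ℕ} (Φ : UFan n) where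
  ε : ∀ q : ℕ, Φ.FaceIdx q → Φ.FaceIdx (q + 1) → ℤ
  ε_unit : ∀ q γ δ, Φ.Adj γ δ → ε q γ δ = 1 ∨ ε q γ δ = -1
  ε_zero : ∀ q γ δ, ¬ Φ.Adj γ δ → ε q γ δ = 0
  ε_rel : ∀ (q : ℕ) (γ : Φ.FaceIdx q) (δ : Φ.FaceIdx (q + 2)),
      (∑ μ : Φ.FaceIdx (q + 1), ε q γ μ * ε (q + 1) μ δ) = 0
  imap : ∀ (p : ℕ) {q : ℕ} (γ : Φ.FaceIdx q) (δ : Φ.FaceIdx (q + 1)), Φ.Adj γ δ →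
      (↥(Φ.Fmod p δ.1.1 δ.1.2) →ₗ[ℤ] ↥(Φ.Fmod p γ.1.1 γ.1.2))
  imap_spec : ∀ (p : ℕ) {q : ℕ} (γ : Φ.FaceIdx q) (δ : Φ.FaceIdx (q + 1)) (h : Φ.Adj γ δ)
      (x : ↥(Φ.Fmod p δ.1.1 δ.1.2)),
      (imap p γ δ h x : ExteriorAlgebra ℤ (Φ.Q γ.1.1)) =
        Φ.emap h.1 (x : ExteriorAlgebra ℤ (Φ.Q δ.1.1))

namespace UFan

variable {n : ℕ} (Φ : UFan n)

/-- The cellular boundary map `C_{p,q+1} → C_{p,q}`. -/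
noncomputable def bdry (td : TropData Φ) (p q : ℕ) :
    Φ.Cch p (q + 1) →ₗ[ℤ] Φ.Cch p q :=
  DirectSum.toModule ℤ _ _ fun δ =>
    ∑ γ : Φ.FaceIdx q,
      if h : Φ.Adj γ δ then
        td.ε q γ δ •
          ((DirectSum.lof ℤ (Φ.FaceIdx q) (fun γ' => ↥(Φ.Fmod p γ'.1.1 γ'.1.2)) γ).comp
            (td.imap p γ δ h))
      else 0

/-- The cellular cochain group `C^{p,q}` of the canonical compactification. -/
abbrev Cco (p q : ℕ) := Module.Dual ℤ (Φ.Cch p q)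

/-- The cellular coboundary map. -/
noncomputable def coder (td : TropData Φ) (p q : ℕ) : Φ.Cco p q →ₗ[ℤ] Φ.Cco p (q + 1) :=
  (Φ.bdry td p q).dualMap

/-- The coboundary arriving in degree `q`. -/
noncomputable def coderFrom (td : TropData Φ) (p : ℕ) :
    ∀ q : ℕ, Φ.Cco p (q - 1) →ₗ[ℤ] Φ.Cco p q
  | 0 => 0
  | (q + 1) => Φ.coder td p q

/-- Tropical cohomology `H^{p,q}` of the canonical compactification. -/
noncomputable def Hcoh (td : TropData Φ) (p q : ℕ) :=
  ↥(LinearMap.ker (Φ.coder td p q)) ⧸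
    Submodule.comap (LinearMap.ker (Φ.coder td p q)).subtype
      (LinearMap.range (Φ.coderFrom td p q))

noncomputable instance (td : TropData Φ) (p q : ℕ) : AddCommGroup (Φ.Hcoh td p q) := by
  unfold Hcoh; infer_instance

/-- The boundary leaving degree `q`. -/
noncomputable def bdryTo (td : TropData Φ) (p : ℕ) :
    ∀ q : ℕ, Φ.Cch p q →ₗ[ℤ] Φ.Cch p (q - 1)
  | 0 => 0
  | (q + 1) => Φ.bdry td p q

instance (p q : ℕ) (M : Submodule ℤ (Φ.Cch p q)) : AddCommGroup M :=
  @Submodule.addCommGroup ℤ (Φ.Cch p q) _ _ _ M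

/-- Tropical homology `H_{p,q}` of the canonical compactification. -/
noncomputable def Hhom (td : TropData Φ) (p q : ℕ) :=
  ↥(LinearMap.ker (Φ.bdryTo td p q)) ⧸
    Submodule.comap (LinearMap.ker (Φ.bdryTo td p q)).subtype
      (LinearMap.range (Φ.bdry td p q))

noncomputable instance (td : TropData Φ) (p q : ℕ) : AddCommGroup (Φ.Hhom td p q) := by
  unfold Hhom; infer_instance

end UFan

namespace UFan

variable {n : ℕ} (Φ : UFan n)

/-- The ideal `I` generated by the monomials `x_{ρ₁} ⋯ x_{ρ_k}` over sets of rays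
not forming a cone of the fan. -/
noncomputable def Iideal : Ideal (MvPolynomial Φ.R ℤ) :=
  Ideal.span {P | ∃ S : Finset Φ.R, S ∉ Φ.faces ∧ P = ∏ r ∈ S, MvPolynomial.X r}

/-- The ideal `J` generated by the linear forms `∑ ρ m(e_ρ) x_ρ`, `m ∈ M = N^*`. -/
noncomputable def Jideal : Ideal (MvPolynomial Φ.R ℤ) :=
  Ideal.span
    {P | ∃ m : Module.Dual ℤ (NZ n), P = ∑ r : Φ.R, m (Φ.e r) • MvPolynomial.X r}

/-- The Chow ring `A^•(Φ) = ℤ[x_ρ : ρ ∈ Φ₁]/(I + J)`. -/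
abbrev Chow := MvPolynomial Φ.R ℤ ⧸ (Φ.Iideal + Φ.Jideal)

/-- The quotient map onto the Chow ring. -/
noncomputable def chowMk : MvPolynomial Φ.R ℤ →ₐ[ℤ] Φ.Chow :=
  Ideal.Quotient.mkₐ ℤ _

/-- The graded piece `A^k(Φ)`: the image of the homogeneous polynomials of degree `k`. -/
noncomputable def ChowGr (k : ℕ) : Submodule ℤ Φ.Chow :=
  Submodule.map (Φ.chowMk).toLinearMap (MvPolynomial.homogeneousSubmodule Φ.R ℤ k)

/-- The cones of dimension `k`. -/
abbrev FacesK (k : ℕ) := {S : Finset Φ.R // S ∈ Φ.faces ∧ S.card = k}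

/-- The balancing condition at a codimension-one cone `τ`, as a linear map on weights:
`w ↦ ∑_{σ ⊃ τ} w(σ) • e_σ^τ ∈ N^τ`, where (by unimodularity) `e_σ^τ` is the class
of the generator of the extra ray of `σ`. -/
noncomputable def balL (k : ℕ) (T : Finset Φ.R) (_ : T ∈ Φ.faces) (hT : T.card + 1 = k) :
    ((Φ.FacesK k) → ℤ) →ₗ[ℤ] Φ.Q T :=
  ∑ r : Φ.R,
    if h : r ∉ T ∧ insert r T ∈ Φ.faces then
      LinearMap.smulRight
        (LinearMap.proj (⟨insert r T, h.2, by
          rw [Finset.card_insert_of_notMem h.1, hT]⟩ : Φ.FacesK k))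
        (Φ.qmap T (Φ.e r))
    else 0

/-- The group `MW_k(Φ)` of Minkowski weights of dimension `k`. -/
noncomputable def MWsub (k : ℕ) : Submodule ℤ ((Φ.FacesK k) → ℤ) :=
  ⨅ (T : Finset Φ.R) (h : T ∈ Φ.faces) (h2 : T.card + 1 = k),
    LinearMap.ker (Φ.balL k T h h2)

/-- The generator `x_σ = ∏_{ρ ≺ σ} x_ρ` of the Chow ring. -/
noncomputable def xcl (S : Finset Φ.R) : Φ.Chow :=
  Φ.chowMk (∏ r ∈ S, MvPolynomial.X r)

lemma xcl_mem_ChowGr (S : Finset Φ.R) (k : ℕ) (hk : S.card = k) :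
    Φ.xcl S ∈ Φ.ChowGr k := by
  refine Submodule.mem_map_of_mem ?_
  rw [MvPolynomial.mem_homogeneousSubmodule]
  subst hk
  have := MvPolynomial.IsHomogeneous.prod (R := ℤ) S (fun r => MvPolynomial.X r) (fun _ => 1)
    (fun r _ => MvPolynomial.isHomogeneous_X ℤ r)
  simpa using this

end UFan

namespace UFan
variable {n : ℕ} (Φ : UFan n)

/-- Total coordinate functional for the unimodular basis attached to a face. -/
noncomputable def mco (S : Finset Φ.R) (r : Φ.R) : NZ n →ₗ[ℤ] ℤ :=
  if h : S ∈ Φ.faces ∧ r ∈ S then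
    ((Φ.unimodular S h.1).choose.coord ((Φ.unimodular S h.1).choose_spec.choose ⟨r, h.2⟩))
  else 0

lemma mco_e {S : Finset Φ.R} (hS : S ∈ Φ.faces) {r t : Φ.R} (hr : r ∈ S) (ht : t ∈ S) :
    Φ.mco S r (Φ.e t) = if r = t then 1 else 0 := by
  rw [mco, dif_pos ⟨hS, hr⟩]
  obtain ⟨hfinj, hf⟩ := (Φ.unimodular S hS).choose_spec.choose_spec
  set b := (Φ.unimodular S hS).choose
  set f := (Φ.unimodular S hS).choose_spec.choose
  rw [← hf ⟨t, ht⟩]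
  rw [Module.Basis.coord_apply, Module.Basis.repr_self, Finsupp.single_apply]
  by_cases h : r = t
  · subst h; simp
  · rw [if_neg, if_neg h]
    intro he
    exact h (congrArg Subtype.val (hfinj he)).symm
lemma mco_repr {S : Finset Φ.R} (hS : S ∈ Φ.faces) {x : NZ n} (hx : x ∈ Φ.Nsub S) :
    x = ∑ r ∈ S, Φ.mco S r x • Φ.e r := by
  obtain ⟨hfinj, hf⟩ := (Φ.unimodular S hS).choose_spec.choose_spec
  set b := (Φ.unimodular S hS).choose with hb
  set f := (Φ.unimodular S hS).choose_spec.choose with hfd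
  have himg : Φ.e '' (S : Set Φ.R) = ⇑b '' (Set.range f) := by
    ext y
    constructor
    · rintro ⟨t, ht, rfl⟩
      exact ⟨f ⟨t, ht⟩, ⟨⟨t, ht⟩, rfl⟩, hf ⟨t, ht⟩⟩
    · rintro ⟨i, ⟨t, rfl⟩, rfl⟩
      exact ⟨t.1, t.2, (hf t).symm⟩
  have hx' : x ∈ Submodule.span ℤ (⇑b '' (Set.range f)) := by
    rw [← himg]; exact hx
  rw [Module.Basis.mem_span_image] at hx'
  have hfin : (b.repr x).support ⊆ Finset.image f S.attach := by
    intro i hi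
    obtain ⟨t, rfl⟩ := hx' (Finsupp.mem_support_iff.2 (Finsupp.mem_support_iff.1 hi))
    exact Finset.mem_image.2 ⟨t, Finset.mem_attach _ _, rfl⟩
  have hx2 : x = ∑ i ∈ Finset.image f S.attach, (b.repr x) i • b i := by
    conv_lhs => rw [← b.linearCombination_repr x]
    rw [Finsupp.linearCombination_apply, Finsupp.sum]
    refine Finset.sum_subset hfin ?_
    intro i _ hi
    simp only [Finsupp.notMem_support_iff] at hi
    rw [hi, zero_smul]
  rw [Finset.sum_image (fun a _ c _ h => hfinj h)] at hx2
  conv_lhs => rw [hx2]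
  rw [← Finset.sum_attach S (fun r => Φ.mco S r x • Φ.e r)]
  refine Finset.sum_congr rfl fun t _ => ?_
  rw [mco, dif_pos ⟨hS, t.2⟩]
  show (b.repr x) (f t) • b (f t) = b.coord (f t) x • Φ.e ↑t
  rw [Module.Basis.coord_apply, hf t]

end UFan
lemma lmap_smul {n : ℕ} (f : NZ n →ₗ[ℤ] ℤ) (c : ℤ) (x : NZ n) :
    f (c • x) = c * f x := by
  have h : f (c • x) = c • f x := map_smul f c x
  rw [h, smul_eq_mul]

namespace UFan
variable {n : ℕ} (Φ : UFan n)

lemma e_mem_Nsub {S : Finset Φ.R} {t : Φ.R} (ht : t ∈ S) : Φ.e t ∈ Φ.Nsub S :=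
  Submodule.subset_span ⟨t, ht, rfl⟩

/-- The flow of a weight through a face. -/
noncomputable def sflow (v : Finset Φ.R → ℤ) (T : Finset Φ.R) : NZ n :=
  ∑ r : Φ.R, if r ∉ T ∧ insert r T ∈ Φ.faces then v (insert r T) • Φ.e r else 0

/-- Balancing condition. -/
def Bal (v : Finset Φ.R → ℤ) : Prop := ∀ T ∈ Φ.faces, Φ.sflow v T ∈ Φ.Nsub T

/-- The divisor (tropical intersection) of a weight with the ray `ρ`. -/
noncomputable def divW (ρ : Φ.R) (v : Finset Φ.R → ℤ) : Finset Φ.R → ℤ := fun T =>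
  if T ∈ Φ.faces then
    (if ρ ∉ T ∧ insert ρ T ∈ Φ.faces then v (insert ρ T) else 0)
      - (if ρ ∈ T then Φ.mco T ρ (Φ.sflow v T) else 0)
  else 0

lemma repr_insert {T : Finset Φ.R} {r : Φ.R} (hr : r ∉ T)
    (hrT : insert r T ∈ Φ.faces) {s : NZ n} (hs : s ∈ Φ.Nsub (insert r T)) :
    s = Φ.mco (insert r T) r s • Φ.e r + ∑ t ∈ T, Φ.mco (insert r T) t s • Φ.e t := by
  conv_lhs => rw [Φ.mco_repr hrT hs]
  exact Finset.sum_insert hr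

lemma sub_coord_mem {T : Finset Φ.R} {r : Φ.R} (hr : r ∉ T)
    (hrT : insert r T ∈ Φ.faces) {s : NZ n} (hs : s ∈ Φ.Nsub (insert r T)) :
    s - Φ.mco (insert r T) r s • Φ.e r ∈ Φ.Nsub T := by
  have h := Φ.repr_insert hr hrT hs
  set c := Φ.mco (insert r T) r s with hc
  set rest := ∑ t ∈ T, Φ.mco (insert r T) t s • Φ.e t with hrest
  rw [h, add_sub_cancel_left]
  exact Submodule.sum_mem _ fun t ht =>
    Submodule.smul_mem _ _ (Φ.e_mem_Nsub ht)

lemma mco_insert_eq {T : Finset Φ.R} (hT : T ∈ Φ.faces) {r : Φ.R} (hr : r ∉ T)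
    (hrT : insert r T ∈ Φ.faces) {s : NZ n} (hs : s ∈ Φ.Nsub (insert r T))
    {p : Φ.R} (hp : p ∈ T) :
    Φ.mco (insert r T) p s
      = Φ.mco T p s - Φ.mco (insert r T) r s * Φ.mco T p (Φ.e r) := by
  have h1 : Φ.mco T p s
      = Φ.mco (insert r T) r s * Φ.mco T p (Φ.e r)
        + ∑ t ∈ T, Φ.mco (insert r T) t s * Φ.mco T p (Φ.e t) := by
    conv_lhs => rw [Φ.repr_insert hr hrT hs]
    rw [map_add, map_sum]
    simp only [lmap_smul]
  have h2 : ∑ t ∈ T, Φ.mco (insert r T) t s * Φ.mco T p (Φ.e t)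
      = Φ.mco (insert r T) p s := by
    rw [Finset.sum_eq_single p]
    · rw [Φ.mco_e hT hp hp, if_pos rfl, mul_one]
    · intro t ht htp
      rw [Φ.mco_e hT hp ht, if_neg (fun h => htp h.symm), mul_zero]
    · intro h; exact absurd hp h
  rw [h2] at h1
  omega

end UFan
namespace UFan
variable {n : ℕ} (Φ : UFan n)

lemma guard_symm {T : Finset Φ.R} {r u : Φ.R} :
    ((r ∉ T ∧ insert r T ∈ Φ.faces) ∧ u ∉ insert r T ∧ insert u (insert r T) ∈ Φ.faces)
    ↔ ((u ∉ T ∧ insert u T ∈ Φ.faces) ∧ r ∉ insert u T ∧ insert r (insert u T) ∈ Φ.faces) := by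
  constructor <;> rintro ⟨⟨h1, h2⟩, h3, h4⟩
  · rw [Finset.mem_insert, not_or] at h3
    refine ⟨⟨h3.2, Φ.down_closed _ (by rwa [Finset.insert_comm] at h4) _
        (Finset.insert_subset_insert _ (Finset.subset_insert _ _))⟩, ?_, by rwa [Finset.insert_comm]⟩
    rw [Finset.mem_insert, not_or]
    exact ⟨fun h => h3.1 h.symm, h1⟩
  · rw [Finset.mem_insert, not_or] at h3
    refine ⟨⟨h3.2, Φ.down_closed _ (by rwa [Finset.insert_comm] at h4) _
        (Finset.insert_subset_insert _ (Finset.subset_insert _ _))⟩, ?_, by rwa [Finset.insert_comm]⟩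
    rw [Finset.mem_insert, not_or]
    exact ⟨fun h => h3.1 h.symm, h1⟩

lemma div_insert_of_mem {v : Finset Φ.R → ℤ} {ρ : Φ.R} {T : Finset Φ.R} (hρ : ρ ∈ T)
    {r : Φ.R} (h1 : r ∉ T) (h2 : insert r T ∈ Φ.faces) :
    Φ.divW ρ v (insert r T) = -(Φ.mco (insert r T) ρ (Φ.sflow v (insert r T))) := by
  rw [divW, if_pos h2, if_neg (by simp [Finset.mem_insert, hρ]),
    if_pos (Finset.mem_insert_of_mem hρ), zero_sub]

lemma sflow_divW_of_not_mem {v : Finset Φ.R → ℤ} {ρ : Φ.R} {T : Finset Φ.R} (hρ : ρ ∉ T)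
    (hf : insert ρ T ∈ Φ.faces) :
    Φ.sflow (Φ.divW ρ v) T = Φ.sflow v (insert ρ T)
      - Φ.mco (insert ρ T) ρ (Φ.sflow v (insert ρ T)) • Φ.e ρ := by
  set D := Φ.mco (insert ρ T) ρ (Φ.sflow v (insert ρ T)) with hD
  have hDsum : D • Φ.e ρ = ∑ r : Φ.R, if r = ρ then D • Φ.e r else 0 := by
    rw [Finset.sum_ite_eq' Finset.univ ρ (fun r => D • Φ.e r)]
    rw [if_pos (Finset.mem_univ ρ)]
  rw [sflow, sflow, hDsum, ← Finset.sum_sub_distrib]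
  refine Finset.sum_congr rfl fun r _ => ?_
  by_cases hrρ : r = ρ
  · subst hrρ
    rw [if_pos rfl, if_pos ⟨hρ, hf⟩, divW, if_pos hf,
      if_neg (by simp), if_pos (Finset.mem_insert_self r T), zero_sub,
      if_neg (by simp), zero_sub, neg_smul]
  · rw [if_neg hrρ, sub_zero]
    by_cases hg : r ∉ T ∧ insert r T ∈ Φ.faces
    · have hρr : ρ ∉ insert r T := by
        simp only [Finset.mem_insert]
        rintro (h | h)
        · exact hrρ h.symm
        · exact hρ h
      have hrρT : r ∉ insert ρ T := by
        simp only [Finset.mem_insert]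
        rintro (h | h)
        · exact hrρ h
        · exact hg.1 h
      rw [if_pos hg, divW, if_pos hg.2, if_neg hρr, sub_zero]
      have hcong : (if ρ ∉ insert r T ∧ insert ρ (insert r T) ∈ Φ.faces
          then v (insert ρ (insert r T)) else 0)
          = (if r ∉ insert ρ T ∧ insert r (insert ρ T) ∈ Φ.faces
          then v (insert r (insert ρ T)) else 0) := by
        rw [Finset.insert_comm]
        exact if_congr (by rw [and_iff_right hρr, and_iff_right hrρT]) rfl rfl
      rw [hcong, ite_smul, zero_smul]
    · rw [if_neg hg]
      rw [not_and] at hg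
      by_cases hrT : r ∈ T
      · rw [if_neg]
        rintro ⟨h1, _⟩
        exact h1 (Finset.mem_insert_of_mem hrT)
      · rw [if_neg]
        rintro ⟨_, h2⟩
        exact (hg hrT) (Φ.down_closed _ (by rwa [Finset.insert_comm] at h2) _
          (Finset.insert_subset_insert _ (Finset.subset_insert _ _)))

lemma sflow_divW_of_not_mem_nonface {v : Finset Φ.R → ℤ} {ρ : Φ.R} {T : Finset Φ.R}
    (hρ : ρ ∉ T) (hf : insert ρ T ∉ Φ.faces) :
    Φ.sflow (Φ.divW ρ v) T = 0 := by
  refine Finset.sum_eq_zero fun r _ => ?_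
  by_cases hg : r ∉ T ∧ insert r T ∈ Φ.faces
  · rw [if_pos hg]
    by_cases hrρ : r = ρ
    · subst hrρ; rw [divW, if_neg hf, zero_smul]
    · rw [divW, if_pos hg.2, if_neg, if_neg, sub_zero, zero_smul]
      · simp only [Finset.mem_insert]
        rintro (h | h)
        · exact hrρ h.symm
        · exact hρ h
      · rw [not_and]
        intro _
        intro hcon
        exact hf (Φ.down_closed _ hcon _
          (Finset.insert_subset_insert _ (Finset.subset_insert _ _)))
  · rw [if_neg hg]

lemma bal_div {v : Finset Φ.R → ℤ} (hv : Φ.Bal v) (ρ : Φ.R) : Φ.Bal (Φ.divW ρ v) := by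
  intro T hT
  by_cases hρ : ρ ∈ T
  · -- the antisymmetry argument
    set m := Φ.mco T ρ with hm
    have key : ∀ r, r ∉ T → insert r T ∈ Φ.faces →
        Φ.divW ρ v (insert r T) = -(Φ.mco (insert r T) ρ (Φ.sflow v (insert r T))) :=
      fun r h1 h2 => Φ.div_insert_of_mem hρ h1 h2
    set z : NZ n := ∑ r : Φ.R, if r ∉ T ∧ insert r T ∈ Φ.faces then
        m (Φ.e r) • (Φ.sflow v (insert r T)
          - Φ.mco (insert r T) r (Φ.sflow v (insert r T)) • Φ.e r) else 0 with hzdef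
    have hz : z ∈ Φ.Nsub T := by
      refine Submodule.sum_mem _ fun r _ => ?_
      split_ifs with hg
      · exact Submodule.smul_mem _ _ (Φ.sub_coord_mem hg.1 hg.2 (hv _ hg.2))
      · exact Submodule.zero_mem _
    set y : NZ n := Φ.sflow (Φ.divW ρ v) T + z with hydef
    have hy : y = ∑ r : Φ.R, ∑ u : Φ.R,
        (if (r ∉ T ∧ insert r T ∈ Φ.faces) ∧ u ∉ insert r T ∧ insert u (insert r T) ∈ Φ.faces
          then v (insert u (insert r T)) else 0)
          • (m (Φ.e r) • Φ.e u - m (Φ.e u) • Φ.e r) := by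
      rw [hydef, hzdef, sflow, ← Finset.sum_add_distrib]
      refine Finset.sum_congr rfl fun r _ => ?_
      by_cases hg : r ∉ T ∧ insert r T ∈ Φ.faces
      · rw [if_pos hg, if_pos hg, key r hg.1 hg.2]
        have hc := Φ.mco_insert_eq hT hg.1 hg.2 (hv _ hg.2) hρ
        rw [hc]
        set s := Φ.sflow v (insert r T) with hs
        set d := Φ.mco (insert r T) r s with hd
        have lhs_eq : (-(m s - d * m (Φ.e r))) • Φ.e r + m (Φ.e r) • (s - d • Φ.e r)
            = m (Φ.e r) • s - m s • Φ.e r := by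
          module
        rw [lhs_eq]
        -- now expand s
        have hsexp : m (Φ.e r) • s - m s • Φ.e r = ∑ u : Φ.R,
            (if u ∉ insert r T ∧ insert u (insert r T) ∈ Φ.faces
              then v (insert u (insert r T)) else 0)
              • (m (Φ.e r) • Φ.e u - m (Φ.e u) • Φ.e r) := by
          rw [hs, sflow, Finset.smul_sum, map_sum, Finset.sum_smul, ← Finset.sum_sub_distrib]
          refine Finset.sum_congr rfl fun u _ => ?_
          split_ifs with hgu
          · rw [lmap_smul, smul_sub]
            module
          · simp
        rw [hsexp]
        refine Finset.sum_congr rfl fun u _ => ?_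
        congr 1
        exact if_congr (and_iff_right hg).symm rfl rfl
      · rw [if_neg hg, if_neg hg, add_zero]
        refine (Finset.sum_eq_zero fun u _ => ?_).symm
        rw [if_neg (by tauto), zero_smul]
    have hyy : y + y = 0 := by
      nth_rewrite 2 [hy]
      rw [Finset.sum_comm, hy, ← Finset.sum_add_distrib]
      refine Finset.sum_eq_zero fun r _ => ?_
      rw [← Finset.sum_add_distrib]
      refine Finset.sum_eq_zero fun u _ => ?_
      have hguard := Φ.guard_symm (T := T) (r := r) (u := u)
      by_cases hg : (r ∉ T ∧ insert r T ∈ Φ.faces) ∧ u ∉ insert r T ∧ insert u (insert r T) ∈ Φ.faces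
      · rw [if_pos hg, if_pos (hguard.mp hg), Finset.insert_comm]
        module
      · rw [if_neg hg, if_neg (fun h => hg (hguard.mpr h)), zero_smul, zero_smul, add_zero]
    have hy0 : y = 0 := by
      funext i
      have := congrFun hyy i
      simp only [Pi.add_apply, Pi.zero_apply] at this ⊢
      omega
    have hfin : Φ.sflow (Φ.divW ρ v) T = -z :=
      eq_neg_of_add_eq_zero_left (by rw [← hydef, hy0])
    rw [hfin]
    exact Submodule.neg_mem _ hz
  · by_cases hf : insert ρ T ∈ Φ.faces
    · have hsf := Φ.sflow_divW_of_not_mem (v := v) hρ hf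
      rw [hsf]
      exact Φ.sub_coord_mem hρ hf (hv _ hf)
    · have hsf := Φ.sflow_divW_of_not_mem_nonface (v := v) hρ hf
      rw [hsf]
      exact Submodule.zero_mem _

end UFan
namespace UFan
variable {n : ℕ} (Φ : UFan n)
lemma div_comm_aux {v : Finset Φ.R → ℤ} (hv : Φ.Bal v) {ρ ρ' : Φ.R} {T : Finset Φ.R}
    (hT : T ∈ Φ.faces) (hρ : ρ ∈ T) (hρ' : ρ' ∉ T) :
    Φ.divW ρ (Φ.divW ρ' v) T = Φ.divW ρ' (Φ.divW ρ v) T := by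
  have hL : Φ.divW ρ (Φ.divW ρ' v) T = -(Φ.mco T ρ (Φ.sflow (Φ.divW ρ' v) T)) := by
    rw [divW, if_pos hT, if_neg (by simp [hρ]), if_pos hρ, zero_sub]
  by_cases hf : insert ρ' T ∈ Φ.faces
  · have hR : Φ.divW ρ' (Φ.divW ρ v) T
        = -(Φ.mco (insert ρ' T) ρ (Φ.sflow v (insert ρ' T))) := by
      rw [divW, if_pos hT, if_pos ⟨hρ', hf⟩, if_neg hρ', sub_zero,
        Φ.div_insert_of_mem hρ hρ' hf]
    have hx := Φ.mco_insert_eq hT hρ' hf (hv _ hf) hρ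
    rw [hL, hR, Φ.sflow_divW_of_not_mem hρ' hf, map_sub, lmap_smul, hx]
  · have hR : Φ.divW ρ' (Φ.divW ρ v) T = 0 := by
      rw [divW, if_pos hT, if_neg (fun h => hf h.2), if_neg hρ', sub_self]
    rw [hL, hR, Φ.sflow_divW_of_not_mem_nonface hρ' hf, map_zero, neg_zero]
end UFan
namespace UFan
variable {n : ℕ} (Φ : UFan n)

lemma mco_sflow_expand {v : Finset Φ.R → ℤ} (hv : Φ.Bal v) {T : Finset Φ.R}
    (hT : T ∈ Φ.faces) {a b : Φ.R} (ha : a ∈ T) (hb : b ∈ T) :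
    Φ.mco T a (Φ.sflow (Φ.divW b v) T)
      = (∑ r : Φ.R, if r ∉ T ∧ insert r T ∈ Φ.faces then
          Φ.mco (insert r T) r (Φ.sflow v (insert r T)) * Φ.mco T b (Φ.e r)
            * Φ.mco T a (Φ.e r) else 0)
        - ∑ r : Φ.R, ∑ u : Φ.R,
            (if (r ∉ T ∧ insert r T ∈ Φ.faces) ∧ u ∉ insert r T
                ∧ insert u (insert r T) ∈ Φ.faces then
              v (insert u (insert r T)) * Φ.mco T b (Φ.e u) * Φ.mco T a (Φ.e r) else 0) := by
  rw [sflow, map_sum, ← Finset.sum_sub_distrib]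
  refine Finset.sum_congr rfl fun r _ => ?_
  by_cases hg : r ∉ T ∧ insert r T ∈ Φ.faces
  · rw [if_pos hg, if_pos hg, Φ.div_insert_of_mem hb hg.1 hg.2,
      Φ.mco_insert_eq hT hg.1 hg.2 (hv _ hg.2) hb]
    have h1 : Φ.mco T a ((-(Φ.mco T b (Φ.sflow v (insert r T))
        - Φ.mco (insert r T) r (Φ.sflow v (insert r T)) * Φ.mco T b (Φ.e r))) • Φ.e r)
        = Φ.mco (insert r T) r (Φ.sflow v (insert r T)) * Φ.mco T b (Φ.e r)
            * Φ.mco T a (Φ.e r)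
          - Φ.mco T b (Φ.sflow v (insert r T)) * Φ.mco T a (Φ.e r) := by
      rw [lmap_smul]; ring
    rw [h1]
    congr 1
    have h2 : Φ.mco T b (Φ.sflow v (insert r T)) = ∑ u : Φ.R,
        (if u ∉ insert r T ∧ insert u (insert r T) ∈ Φ.faces then
          v (insert u (insert r T)) * Φ.mco T b (Φ.e u) else 0) := by
      rw [sflow, map_sum]
      refine Finset.sum_congr rfl fun u _ => ?_
      split_ifs with hgu
      · rw [lmap_smul]
      · exact map_zero _
    rw [h2, Finset.sum_mul]
    refine Finset.sum_congr rfl fun u _ => ?_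
    rw [ite_mul, zero_mul]
    exact if_congr (and_iff_right hg).symm rfl rfl
  · rw [if_neg hg, if_neg hg, map_zero, zero_sub]
    rw [Finset.sum_eq_zero fun u _ => by rw [if_neg (by tauto)], neg_zero]

lemma div_comm {v : Finset Φ.R → ℤ} (hv : Φ.Bal v) (ρ ρ' : Φ.R) :
    Φ.divW ρ (Φ.divW ρ' v) = Φ.divW ρ' (Φ.divW ρ v) := by
  by_cases hρρ' : ρ = ρ'
  · subst hρρ'; rfl
  funext T
  by_cases hT : T ∈ Φ.faces
  · by_cases h1 : ρ ∈ T <;> by_cases h2 : ρ' ∈ T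
    · -- both in
      have eL : Φ.divW ρ (Φ.divW ρ' v) T = -(Φ.mco T ρ (Φ.sflow (Φ.divW ρ' v) T)) := by
        rw [divW, if_pos hT, if_neg (by simp [h1]), if_pos h1, zero_sub]
      have eR : Φ.divW ρ' (Φ.divW ρ v) T = -(Φ.mco T ρ' (Φ.sflow (Φ.divW ρ v) T)) := by
        rw [divW, if_pos hT, if_neg (by simp [h2]), if_pos h2, zero_sub]
      rw [eL, eR, neg_inj, Φ.mco_sflow_expand hv hT h1 h2, Φ.mco_sflow_expand hv hT h2 h1]
      congr 1
      · exact Finset.sum_congr rfl fun r _ => by rw [mul_right_comm]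
      · rw [Finset.sum_comm]
        refine Finset.sum_congr rfl fun r _ => Finset.sum_congr rfl fun u _ => ?_
        have hguard := Φ.guard_symm (T := T) (r := u) (u := r)
        by_cases hg : (u ∉ T ∧ insert u T ∈ Φ.faces) ∧ r ∉ insert u T
            ∧ insert r (insert u T) ∈ Φ.faces
        · rw [if_pos hg, if_pos (hguard.mp hg), Finset.insert_comm]
          ring
        · rw [if_neg hg, if_neg (fun h => hg (hguard.mpr h))]
    · exact Φ.div_comm_aux hv hT h1 h2
    · exact (Φ.div_comm_aux hv hT h2 h1).symm
    · -- both out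
      have hE : ∀ c d : Φ.R, c ∉ T → d ∉ T → c ≠ d →
          Φ.divW c (Φ.divW d v) T
            = (if insert d (insert c T) ∈ Φ.faces then v (insert d (insert c T)) else 0) := by
        intro c d hc hd hcd
        rw [divW, if_pos hT, if_neg hc, sub_zero]
        by_cases hfc : insert c T ∈ Φ.faces
        · rw [if_pos ⟨hc, hfc⟩, divW, if_pos hfc]
          have hdc : d ∉ insert c T := by
            simp only [Finset.mem_insert]
            rintro (h | h)
            · exact hcd h.symm
            · exact hd h
          rw [if_neg hdc, sub_zero]
          exact if_congr (and_iff_right hdc) rfl rfl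
        · rw [if_neg (fun h => hfc h.2), if_neg]
          intro hcon
          exact hfc (Φ.down_closed _ hcon _ (Finset.subset_insert _ _))
      rw [hE ρ ρ' h1 h2 hρρ', hE ρ' ρ h2 h1 (fun h => hρρ' h.symm), Finset.insert_comm]
  · simp only [divW, if_neg hT]

end UFan
namespace UFan
variable {n : ℕ} (Φ : UFan n)

noncomputable def peel (l : List Φ.R) (v : Finset Φ.R → ℤ) : Finset Φ.R → ℤ :=
  l.foldl (fun v r => Φ.divW r v) v

lemma peel_nil (v : Finset Φ.R → ℤ) : Φ.peel [] v = v := rfl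

lemma peel_cons (r : Φ.R) (l : List Φ.R) (v : Finset Φ.R → ℤ) :
    Φ.peel (r :: l) v = Φ.peel l (Φ.divW r v) := rfl

lemma peel_bal (l : List Φ.R) {v : Finset Φ.R → ℤ} (hv : Φ.Bal v) : Φ.Bal (Φ.peel l v) := by
  induction l generalizing v with
  | nil => exact hv
  | cons r l ih => exact ih (Φ.bal_div hv r)

lemma peel_append (l l' : List Φ.R) (v : Finset Φ.R → ℤ) :
    Φ.peel (l ++ l') v = Φ.peel l' (Φ.peel l v) := by
  rw [peel, peel, peel, List.foldl_append]

lemma peel_perm {l l' : List Φ.R} (h : l.Perm l') :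
    ∀ v : Finset Φ.R → ℤ, Φ.Bal v → Φ.peel l v = Φ.peel l' v := by
  induction h with
  | nil => intro v _; rfl
  | cons x h ih =>
      intro v hv
      rw [peel_cons, peel_cons]
      exact ih _ (Φ.bal_div hv x)
  | swap x y l =>
      intro v hv
      rw [peel_cons, peel_cons, peel_cons, peel_cons, Φ.div_comm hv x y]
  | trans h1 h2 ih1 ih2 =>
      intro v hv
      rw [ih1 v hv, ih2 v hv]

lemma peel_eval : ∀ (l : List Φ.R), l.Nodup → l.toFinset ∈ Φ.faces →
    ∀ v : Finset Φ.R → ℤ, Φ.peel l v ∅ = v l.toFinset := by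
  intro l
  induction l with
  | nil => intro _ _ v; rfl
  | cons r l ih =>
      intro hnd hface v
      rw [List.nodup_cons] at hnd
      rw [List.toFinset_cons] at hface
      have hlf : l.toFinset ∈ Φ.faces :=
        Φ.down_closed _ hface _ (Finset.subset_insert _ _)
      rw [peel_cons, ih hnd.2 hlf, List.toFinset_cons]
      rw [divW, if_pos hlf, if_pos ⟨fun hc => hnd.1 (List.mem_toFinset.1 hc), hface⟩,
        if_neg (fun hc => hnd.1 (List.mem_toFinset.1 hc)), sub_zero]

lemma div_supp {v : Finset Φ.R → ℤ} {C : Finset Φ.R}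
    (hv : ∀ S, v S ≠ 0 → S ∪ C ∈ Φ.faces) (ρ : Φ.R) :
    ∀ S, Φ.divW ρ v S ≠ 0 → S ∪ insert ρ C ∈ Φ.faces := by
  intro S hS
  rw [divW] at hS
  by_cases hSf : S ∈ Φ.faces
  swap
  · rw [if_neg hSf] at hS; exact absurd rfl hS
  rw [if_pos hSf] at hS
  have hunion : S ∪ insert ρ C = insert ρ S ∪ C := by
    ext x
    simp only [Finset.mem_union, Finset.mem_insert]
    tauto
  by_cases hA : (if ρ ∉ S ∧ insert ρ S ∈ Φ.faces then v (insert ρ S) else 0) ≠ 0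
  · rw [hunion]
    by_cases hg : ρ ∉ S ∧ insert ρ S ∈ Φ.faces
    · rw [if_pos hg] at hA
      exact hv _ hA
    · rw [if_neg hg] at hA; exact absurd rfl hA
  · push_neg at hA
    rw [hA, zero_sub, neg_ne_zero] at hS
    by_cases hρS : ρ ∈ S
    swap
    · rw [if_neg hρS] at hS; exact absurd rfl hS
    rw [if_pos hρS] at hS
    have hsf : Φ.sflow v S ≠ 0 := fun h => hS (by rw [h, map_zero])
    obtain ⟨r, _, hr⟩ := Finset.exists_ne_zero_of_sum_ne_zero hsf
    by_cases hg : r ∉ S ∧ insert r S ∈ Φ.faces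
    · rw [if_pos hg] at hr
      have hvr : v (insert r S) ≠ 0 := fun h => hr (by rw [h, zero_smul])
      have h1 : insert r S ∪ C ∈ Φ.faces := hv _ hvr
      have h2 : S ∪ C ∈ Φ.faces :=
        Φ.down_closed _ h1 _ (Finset.union_subset_union_left (Finset.subset_insert _ _))
      have : S ∪ insert ρ C = S ∪ C := by
        ext x
        simp only [Finset.mem_union, Finset.mem_insert]
        constructor
        · rintro (h | rfl | h)
          · exact Or.inl h
          · exact Or.inl hρS
          · exact Or.inr h
        · tauto
      rwa [this]
    · rw [if_neg hg] at hr; exact absurd rfl hr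

lemma peel_supp : ∀ (l : List Φ.R) {v : Finset Φ.R → ℤ} {C : Finset Φ.R},
    (∀ S, v S ≠ 0 → S ∪ C ∈ Φ.faces) →
    ∀ S, Φ.peel l v S ≠ 0 → S ∪ (C ∪ l.toFinset) ∈ Φ.faces := by
  intro l
  induction l with
  | nil =>
      intro v C hv S hS
      simpa using hv S hS
  | cons r l ih =>
      intro v C hv S hS
      rw [peel_cons] at hS
      have h1 := ih (Φ.div_supp hv r) S hS
      have : C ∪ (r :: l).toFinset = insert r C ∪ l.toFinset := by
        rw [List.toFinset_cons]
        ext x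
        simp only [Finset.mem_union, Finset.mem_insert]
        tauto
      rw [this]
      exact h1

/-- Extension of a Minkowski weight to all finsets. -/
noncomputable def wext (k : ℕ) (w : Φ.FacesK k → ℤ) : Finset Φ.R → ℤ := fun S =>
  if h : S ∈ Φ.faces ∧ S.card = k then w ⟨S, h⟩ else 0

lemma wext_supp (k : ℕ) (w : Φ.FacesK k → ℤ) :
    ∀ S, Φ.wext k w S ≠ 0 → S ∪ (∅ : Finset Φ.R) ∈ Φ.faces := by
  intro S hS
  rw [Finset.union_empty]
  rw [wext] at hS
  by_cases h : S ∈ Φ.faces ∧ S.card = k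
  · exact h.1
  · rw [dif_neg h] at hS; exact absurd rfl hS

lemma wext_bal (k : ℕ) (w : Φ.FacesK k → ℤ) (hw : w ∈ Φ.MWsub k) :
    Φ.Bal (Φ.wext k w) := by
  intro T hT
  by_cases hcard : T.card + 1 = k
  · -- use the balancing condition
    have h0 : Φ.balL k T hT hcard w = 0 := by
      have hthis := hw
      rw [MWsub] at hthis
      simp only [Submodule.mem_iInf, LinearMap.mem_ker] at hthis
      exact hthis T hT hcard
    have hbal : Φ.balL k T hT hcard w = ∑ r : Φ.R,
        (if hg : r ∉ T ∧ insert r T ∈ Φ.faces then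
          w ⟨insert r T, hg.2, by rw [Finset.card_insert_of_notMem hg.1, hcard]⟩
            • Φ.qmap T (Φ.e r) else 0) := by
      rw [balL, LinearMap.sum_apply]
      refine Finset.sum_congr rfl fun r _ => ?_
      rw [apply_dite (fun (F : ((Φ.FacesK k) → ℤ) →ₗ[ℤ] Φ.Q T) => F w)]
      by_cases hg : r ∉ T ∧ insert r T ∈ Φ.faces
      · rw [dif_pos hg, dif_pos hg, LinearMap.smulRight_apply, LinearMap.proj_apply]
      · rw [dif_neg hg, dif_neg hg, LinearMap.zero_apply]
    have hflow : Φ.qmap T (Φ.sflow (Φ.wext k w) T) = Φ.balL k T hT hcard w := by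
      rw [hbal, sflow, map_sum]
      refine Finset.sum_congr rfl fun r _ => ?_
      by_cases hg : r ∉ T ∧ insert r T ∈ Φ.faces
      · rw [if_pos hg, dif_pos hg]
        have hmem : insert r T ∈ Φ.faces ∧ (insert r T).card = k := by
          refine ⟨hg.2, ?_⟩
          rw [Finset.card_insert_of_notMem hg.1, hcard]
        rw [wext, dif_pos hmem, map_smul]
      · rw [if_neg hg, dif_neg hg, map_zero]
    have hq := hflow.trans h0
    rw [qmap, Submodule.mkQ_apply, Submodule.Quotient.mk_eq_zero] at hq
    exact hq
  · have h0 : Φ.sflow (Φ.wext k w) T = 0 := by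
      refine Finset.sum_eq_zero fun r _ => ?_
      by_cases hg : r ∉ T ∧ insert r T ∈ Φ.faces
      · rw [if_pos hg, wext, dif_neg, zero_smul]
        rintro ⟨_, hc⟩
        rw [Finset.card_insert_of_notMem hg.1] at hc
        exact hcard hc
      · rw [if_neg hg]
    rw [h0]
    exact Submodule.zero_mem _

/-- The value of the iterated divisor against a monomial exponent. -/
noncomputable def Wm (k : ℕ) (w : Φ.FacesK k → ℤ) (a : Φ.R →₀ ℕ) : ℤ :=
  Φ.peel (Finsupp.toMultiset a).toList (Φ.wext k w) ∅

lemma Wm_nonface (k : ℕ) (w : Φ.FacesK k → ℤ) (a : Φ.R →₀ ℕ)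
    (ha : a.support ∉ Φ.faces) : Φ.Wm k w a = 0 := by
  by_contra h
  have h1 := Φ.peel_supp (Finsupp.toMultiset a).toList (Φ.wext_supp k w) ∅ h
  have h2 : (Finsupp.toMultiset a).toList.toFinset = a.support := by
    rw [← List.toFinset_coe, Multiset.coe_toList, Finsupp.toFinset_toMultiset]
  rw [h2] at h1
  simp only [Finset.empty_union] at h1
  exact ha h1

end UFan
namespace UFan
variable {n : ℕ} (Φ : UFan n)

lemma Wm_face (k : ℕ) (w : Φ.FacesK k → ℤ) {S : Finset Φ.R} (hS : S ∈ Φ.faces) :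
    Φ.Wm k w (∑ r ∈ S, Finsupp.single r 1) = Φ.wext k w S := by
  have hms : Finsupp.toMultiset (∑ r ∈ S, Finsupp.single r 1) = S.val := by
    rw [map_sum]
    simp only [Finsupp.toMultiset_single, one_nsmul]
    exact Finset.sum_multiset_singleton S
  rw [Wm, hms]
  have hnd : (S.val).toList.Nodup := by
    have := S.nodup
    rwa [← Multiset.coe_toList S.val, Multiset.coe_nodup] at this
  have htf : (S.val).toList.toFinset = S := by
    rw [← List.toFinset_coe, Multiset.coe_toList, Finset.val_toFinset]
  rw [Φ.peel_eval _ hnd (by rwa [htf]) _, htf]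

lemma Wm_J (k : ℕ) {w : Φ.FacesK k → ℤ} (hw : w ∈ Φ.MWsub k)
    (m : Module.Dual ℤ (NZ n)) (b : Φ.R →₀ ℕ) :
    ∑ r : Φ.R, m (Φ.e r) * Φ.Wm k w (b + Finsupp.single r 1) = 0 := by
  set u := Φ.peel (Finsupp.toMultiset b).toList (Φ.wext k w) with hu
  have hub : Φ.Bal u := Φ.peel_bal _ (Φ.wext_bal k w hw)
  have hW : ∀ r : Φ.R, Φ.Wm k w (b + Finsupp.single r 1) = Φ.divW r u ∅ := by
    intro r
    rw [Wm]
    have hperm : ((Finsupp.toMultiset (b + Finsupp.single r 1)).toList).Perm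
        ((Finsupp.toMultiset b).toList ++ [r]) := by
      have hcoe : ((((Finsupp.toMultiset (b + Finsupp.single r 1)).toList) : List Φ.R) : Multiset Φ.R)
          = (((Finsupp.toMultiset b).toList ++ [r] : List Φ.R) : Multiset Φ.R) := by
        rw [Multiset.coe_toList]
        rw [show ((((Finsupp.toMultiset b).toList ++ [r] : List Φ.R)) : Multiset Φ.R)
          = ((Finsupp.toMultiset b).toList : Multiset Φ.R) + ([r] : List Φ.R) from rfl]
        rw [Multiset.coe_toList, map_add, Finsupp.toMultiset_single, one_nsmul]
        rfl
      exact Multiset.coe_eq_coe.1 hcoe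
    rw [Φ.peel_perm hperm _ (Φ.wext_bal k w hw), Φ.peel_append, ← hu, peel_cons, peel_nil]
  have hs : Φ.sflow u ∅ = 0 := by
    have hmem := hub ∅ Φ.empty_mem
    rw [Nsub] at hmem
    simpa using hmem
  have hterm : ∀ r : Φ.R, m (Φ.e r) * Φ.Wm k w (b + Finsupp.single r 1)
      = m (if r ∉ (∅ : Finset Φ.R) ∧ insert r ∅ ∈ Φ.faces
          then u (insert r ∅) • Φ.e r else 0) := by
    intro r
    rw [hW r, divW, if_pos Φ.empty_mem, if_neg (Finset.notMem_empty r), sub_zero,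
      apply_ite m, map_zero, lmap_smul]
    by_cases hg : r ∉ (∅ : Finset Φ.R) ∧ insert r ∅ ∈ Φ.faces
    · rw [if_pos hg, if_pos hg, mul_comm]
    · rw [if_neg hg, if_neg hg, mul_zero]
  calc ∑ r : Φ.R, m (Φ.e r) * Φ.Wm k w (b + Finsupp.single r 1)
      = ∑ r : Φ.R, m (if r ∉ (∅ : Finset Φ.R) ∧ insert r ∅ ∈ Φ.faces
          then u (insert r ∅) • Φ.e r else 0) := Finset.sum_congr rfl fun r _ => hterm r
    _ = m (Φ.sflow u ∅) := by rw [sflow, map_sum]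
    _ = 0 := by rw [hs, map_zero]

end UFan
namespace UFan
variable {n : ℕ} (Φ : UFan n)

/-- The indicator exponent of a squarefree monomial. -/
noncomputable def sind (S : Finset Φ.R) : Φ.R →₀ ℕ := ∑ r ∈ S, Finsupp.single r 1

lemma sind_apply (S : Finset Φ.R) (r : Φ.R) : Φ.sind S r = if r ∈ S then 1 else 0 := by
  rw [sind, Finsupp.finset_sum_apply]
  by_cases h : r ∈ S
  · rw [if_pos h, Finset.sum_eq_single_of_mem r h
      (fun t _ ht => by rw [Finsupp.single_apply, if_neg ht]),
      Finsupp.single_apply, if_pos rfl]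
  · rw [if_neg h]
    exact Finset.sum_eq_zero fun t htS => by
      rw [Finsupp.single_apply, if_neg (fun (he : t = r) => h (he ▸ htS))]

lemma prod_X_eq (S : Finset Φ.R) :
    (∏ r ∈ S, (MvPolynomial.X r : MvPolynomial Φ.R ℤ))
      = MvPolynomial.monomial (Φ.sind S) 1 := by
  classical
  induction S using Finset.induction_on with
  | empty => simp [sind]
  | insert r S' hrS ih =>
      have hsind : Φ.sind (insert r S') = Finsupp.single r 1 + Φ.sind S' := by
        rw [sind, sind, Finset.sum_insert hrS]
      rw [Finset.prod_insert hrS, ih, hsind,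
        show (MvPolynomial.X r : MvPolynomial Φ.R ℤ)
          = MvPolynomial.monomial (Finsupp.single r 1) 1 from rfl,
        MvPolynomial.monomial_mul, one_mul]

/-- The pairing of a Minkowski weight against polynomials. -/
noncomputable def lfun (k : ℕ) (w : Φ.FacesK k → ℤ) : MvPolynomial Φ.R ℤ →ₗ[ℤ] ℤ :=
  (MvPolynomial.basisMonomials Φ.R ℤ).constr ℤ (Φ.Wm k w)

lemma lfun_monomial (k : ℕ) (w : Φ.FacesK k → ℤ) (a : Φ.R →₀ ℕ) (c : ℤ) :
    Φ.lfun k w (MvPolynomial.monomial a c) = c * Φ.Wm k w a := by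
  have h1 : (MvPolynomial.monomial a c : MvPolynomial Φ.R ℤ)
      = c • (MvPolynomial.basisMonomials Φ.R ℤ a) := by
    rw [MvPolynomial.coe_basisMonomials]
    rw [MvPolynomial.smul_monomial, smul_eq_mul, mul_one]
  rw [h1, map_smul, lfun, Module.Basis.constr_basis, smul_eq_mul]

lemma lfun_vanish (k : ℕ) {w : Φ.FacesK k → ℤ} (hw : w ∈ Φ.MWsub k) :
    ∀ x ∈ Φ.Iideal + Φ.Jideal, Φ.lfun k w x = 0 := by
  have hIJ : Φ.Iideal + Φ.Jideal = Ideal.span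
      ({P | ∃ S : Finset Φ.R, S ∉ Φ.faces ∧ P = ∏ r ∈ S, MvPolynomial.X r}
        ∪ {P | ∃ m : Module.Dual ℤ (NZ n), P = ∑ r : Φ.R, m (Φ.e r) • MvPolynomial.X r}) := by
    rw [Ideal.span_union, Iideal, Jideal, Submodule.add_eq_sup]
  intro x hx
  rw [hIJ] at hx
  have key : ∀ g ∈ ({P | ∃ S : Finset Φ.R, S ∉ Φ.faces ∧ P = ∏ r ∈ S, MvPolynomial.X r}
        ∪ {P | ∃ m : Module.Dual ℤ (NZ n), P = ∑ r : Φ.R, m (Φ.e r) • MvPolynomial.X r} :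
          Set (MvPolynomial Φ.R ℤ)),
      ∀ Q : MvPolynomial Φ.R ℤ, Φ.lfun k w (Q * g) = 0 := by
    rintro g (⟨S, hSf, rfl⟩ | ⟨m, rfl⟩) Q
    · -- I generator
      induction Q using MvPolynomial.induction_on' with
      | add p q hp hq => rw [add_mul, map_add, hp, hq, add_zero]
      | monomial a c =>
          rw [Φ.prod_X_eq, MvPolynomial.monomial_mul, mul_one, Φ.lfun_monomial]
          have hsup : (a + Φ.sind S).support ∉ Φ.faces := by
            intro hcon
            refine hSf (Φ.down_closed _ hcon S fun r hr => ?_)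
            rw [Finsupp.mem_support_iff]
            have : (a + Φ.sind S) r = a r + Φ.sind S r := rfl
            rw [this, Φ.sind_apply, if_pos hr]
            omega
          rw [Φ.Wm_nonface k w _ hsup, mul_zero]
    · -- J generator
      induction Q using MvPolynomial.induction_on' with
      | add p q hp hq => rw [add_mul, map_add, hp, hq, add_zero]
      | monomial a c =>
          have hexp : (MvPolynomial.monomial a c) * (∑ r : Φ.R, m (Φ.e r) • MvPolynomial.X r)
              = ∑ r : Φ.R, m (Φ.e r) • MvPolynomial.monomial (a + Finsupp.single r 1) c := by
            rw [Finset.mul_sum]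
            refine Finset.sum_congr rfl fun r _ => ?_
            rw [mul_smul_comm,
              show (MvPolynomial.X r : MvPolynomial Φ.R ℤ)
                = MvPolynomial.monomial (Finsupp.single r 1) 1 from rfl,
              MvPolynomial.monomial_mul, mul_one]
          rw [hexp, map_sum]
          have hterm : ∀ r : Φ.R, Φ.lfun k w (m (Φ.e r)
              • MvPolynomial.monomial (a + Finsupp.single r 1) c)
              = c * (m (Φ.e r) * Φ.Wm k w (a + Finsupp.single r 1)) := by
            intro r
            rw [map_smul, Φ.lfun_monomial, smul_eq_mul]
            ring
          rw [Finset.sum_congr rfl fun r _ => hterm r, ← Finset.mul_sum,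
            Φ.Wm_J k hw m a, mul_zero]
  have main : ∀ Q : MvPolynomial Φ.R ℤ, Φ.lfun k w (Q * x) = 0 := by
    refine Submodule.span_induction
      (p := fun x _ => ∀ Q : MvPolynomial Φ.R ℤ, Φ.lfun k w (Q * x) = 0)
      (fun g hg Q => key g hg Q)
      (fun Q => by rw [mul_zero, map_zero])
      (fun a b _ _ ha hb Q => by rw [mul_add, map_add, ha, hb, add_zero])
      (fun q a _ ha Q => by
        have hq : q • a = q * a := rfl
        rw [hq, ← mul_assoc]
        exact ha (Q * q)) hx
  have hfin := main 1
  rwa [one_mul] at hfin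

end UFan
namespace UFan
variable {n : ℕ} (Φ : UFan n)

/-- The pairing of a Minkowski weight against the Chow ring. -/
noncomputable def lchow (k : ℕ) (w : Φ.FacesK k → ℤ) (hw : w ∈ Φ.MWsub k) :
    Φ.Chow →ₗ[ℤ] ℤ :=
  (Submodule.liftQ ((Φ.Iideal + Φ.Jideal).restrictScalars ℤ) (Φ.lfun k w)
      (fun x hx => Φ.lfun_vanish k hw x hx)).comp
    (Submodule.Quotient.restrictScalarsEquiv ℤ
      ((Φ.Iideal + Φ.Jideal : Ideal (MvPolynomial Φ.R ℤ)) : Submodule (MvPolynomial Φ.R ℤ) (MvPolynomial Φ.R ℤ))).symm.toLinearMap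

lemma lchow_mk (k : ℕ) (w : Φ.FacesK k → ℤ) (hw : w ∈ Φ.MWsub k) (P : MvPolynomial Φ.R ℤ) :
    Φ.lchow k w hw (Φ.chowMk P) = Φ.lfun k w P := by
  rw [lchow]
  have h1 : Φ.chowMk P = Submodule.Quotient.mk P := rfl
  rw [h1]
  simp only [LinearMap.comp_apply, LinearEquiv.coe_toLinearMap,
    Submodule.Quotient.restrictScalarsEquiv_symm_mk, Submodule.liftQ_apply]
  rfl

lemma lchow_xcl (k : ℕ) (w : Φ.FacesK k → ℤ) (hw : w ∈ Φ.MWsub k) {S : Finset Φ.R}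
    (hS : S ∈ Φ.faces) (hk : S.card = k) :
    Φ.lchow k w hw (Φ.xcl S) = w ⟨S, hS, hk⟩ := by
  rw [xcl, lchow_mk, Φ.prod_X_eq, Φ.lfun_monomial, one_mul, sind, Φ.Wm_face k w hS,
    wext, dif_pos ⟨hS, hk⟩]

end UFan
namespace UFan
variable {n : ℕ} (Φ : UFan n)

lemma chowMk_nonface {a : Φ.R →₀ ℕ} (ha : a.support ∉ Φ.faces) :
    Φ.chowMk (MvPolynomial.monomial a 1) = 0 := by
  have hdecomp : a = (a - Φ.sind a.support) + Φ.sind a.support := by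
    ext r
    rw [Finsupp.add_apply, Finsupp.tsub_apply, Φ.sind_apply]
    by_cases h : r ∈ a.support
    · rw [if_pos h]
      have : 1 ≤ a r := Nat.one_le_iff_ne_zero.2 (Finsupp.mem_support_iff.1 h)
      omega
    · rw [if_neg h]
      omega
  have hmul : MvPolynomial.monomial a (1 : ℤ)
      = MvPolynomial.monomial (a - Φ.sind a.support) 1 * ∏ r ∈ a.support, MvPolynomial.X r := by
    rw [Φ.prod_X_eq, MvPolynomial.monomial_mul, one_mul]
    rw [← hdecomp]
  rw [hmul, map_mul]
  have hI : Φ.chowMk (∏ r ∈ a.support, MvPolynomial.X r) = 0 := by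
    rw [chowMk, Ideal.Quotient.mkₐ_eq_mk, Ideal.Quotient.eq_zero_iff_mem]
    exact Submodule.mem_sup_left (Ideal.subset_span ⟨a.support, ha, rfl⟩)
  rw [hI, mul_zero]

lemma chow_monomial_mem (k : ℕ) : ∀ (N : ℕ) (a : Φ.R →₀ ℕ), (a.sum fun _ e => e) = k →
    (a.sum fun _ e => e) - a.support.card ≤ N →
    Φ.chowMk (MvPolynomial.monomial a 1) ∈
      Submodule.span ℤ (Set.range fun σ : Φ.FacesK k => Φ.xcl σ.1) := by
  intro N
  induction N with
  | zero =>
      intro a hsum hμ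
      by_cases hface : a.support ∈ Φ.faces
      · -- squarefree: all exponents are 1
        by_cases hsq : ∃ ρ ∈ a.support, 2 ≤ a ρ
        · exfalso
          obtain ⟨ρ, hρs, hρ2⟩ := hsq
          have hlt : a.support.card < a.sum fun _ e => e := by
            rw [Finsupp.sum, Finset.card_eq_sum_ones]
            exact Finset.sum_lt_sum
              (fun i hi => Nat.one_le_iff_ne_zero.2 (Finsupp.mem_support_iff.1 hi))
              ⟨ρ, hρs, by omega⟩
          omega
        · push_neg at hsq
          have haeq : a = Φ.sind a.support := by
            ext r
            rw [Φ.sind_apply]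
            by_cases h : r ∈ a.support
            · rw [if_pos h]
              have h1 : 1 ≤ a r := Nat.one_le_iff_ne_zero.2 (Finsupp.mem_support_iff.1 h)
              have h2 := hsq r h
              omega
            · rw [if_neg h]
              exact Finsupp.notMem_support_iff.1 h
          have hcard : a.support.card = k := by
            have : (a.sum fun _ e => e) = a.support.card := by
              rw [Finsupp.sum]
              rw [Finset.card_eq_sum_ones]
              refine Finset.sum_congr rfl fun r hr => ?_
              have h1 : 1 ≤ a r := Nat.one_le_iff_ne_zero.2 (Finsupp.mem_support_iff.1 hr)
              have h2 := hsq r hr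
              omega
            omega
          refine Submodule.subset_span ⟨⟨a.support, hface, hcard⟩, ?_⟩
          show Φ.xcl a.support = Φ.chowMk (MvPolynomial.monomial a 1)
          rw [xcl, Φ.prod_X_eq, ← haeq]
      · rw [Φ.chowMk_nonface hface]
        exact Submodule.zero_mem _
  | succ N ih =>
      intro a hsum hμ
      by_cases hface : a.support ∈ Φ.faces
      · by_cases hsq : ∃ ρ ∈ a.support, 2 ≤ a ρ
        · obtain ⟨ρ, hρs, hρ2⟩ := hsq
          set a' := a - Finsupp.single ρ 1 with ha'
          have haeq : a = Finsupp.single ρ 1 + a' := by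
            ext r
            rw [Finsupp.add_apply, ha', Finsupp.tsub_apply, Finsupp.single_apply]
            by_cases h : ρ = r
            · subst h; rw [if_pos rfl]; omega
            · rw [if_neg h]; omega
          have hsupp' : a'.support = a.support := by
            ext r
            rw [Finsupp.mem_support_iff, Finsupp.mem_support_iff, ha',
              Finsupp.tsub_apply, Finsupp.single_apply]
            by_cases h : ρ = r
            · subst h; rw [if_pos rfl]; constructor <;> (intro hh; omega)
            · rw [if_neg h]
              constructor <;> (intro hh; omega)
          set m := Φ.mco a.support ρ with hm
          have hJ : Φ.chowMk ((∑ r : Φ.R, m (Φ.e r) • MvPolynomial.X r)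
              * MvPolynomial.monomial a' 1) = 0 := by
            rw [chowMk, Ideal.Quotient.mkₐ_eq_mk, Ideal.Quotient.eq_zero_iff_mem]
            exact Submodule.mem_sup_right
              (Ideal.mul_mem_right _ _ (Ideal.subset_span ⟨m, rfl⟩))
          have hexp : (∑ r : Φ.R, m (Φ.e r) • MvPolynomial.X r)
              * MvPolynomial.monomial a' (1 : ℤ)
              = ∑ r : Φ.R, m (Φ.e r) • MvPolynomial.monomial (Finsupp.single r 1 + a') 1 := by
            rw [Finset.sum_mul]
            refine Finset.sum_congr rfl fun r _ => ?_
            rw [smul_mul_assoc,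
              show (MvPolynomial.X r : MvPolynomial Φ.R ℤ)
                = MvPolynomial.monomial (Finsupp.single r 1) 1 from rfl,
              MvPolynomial.monomial_mul, one_mul]
          rw [hexp, map_sum] at hJ
          have hsplit : ∀ r : Φ.R, r ∈ a.support →
              Φ.chowMk (m (Φ.e r) • MvPolynomial.monomial (Finsupp.single r 1 + a') 1)
              = (if ρ = r then Φ.chowMk (MvPolynomial.monomial a 1) else 0) := by
            intro r hr
            rw [map_smul, hm, Φ.mco_e hface hρs hr]
            by_cases h : ρ = r
            · subst h
              rw [if_pos rfl, if_pos rfl, one_smul, ← haeq]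
            · rw [if_neg h, if_neg h, zero_smul]
          rw [← Finset.sum_filter_add_sum_filter_not Finset.univ (· ∈ a.support)] at hJ
          have hfirst : ∑ r ∈ Finset.univ.filter (· ∈ a.support),
              Φ.chowMk (m (Φ.e r) • MvPolynomial.monomial (Finsupp.single r 1 + a') 1)
              = Φ.chowMk (MvPolynomial.monomial a 1) := by
            rw [Finset.sum_congr rfl (fun r hr =>
              hsplit r (Finset.mem_filter.1 hr).2)]
            rw [Finset.sum_ite_eq (Finset.univ.filter (· ∈ a.support)) ρ
              (fun _ => Φ.chowMk (MvPolynomial.monomial a 1))]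
            rw [if_pos (Finset.mem_filter.2 ⟨Finset.mem_univ _, hρs⟩)]
          rw [hfirst] at hJ
          have hmain : Φ.chowMk (MvPolynomial.monomial a 1)
              = - ∑ r ∈ Finset.univ.filter (¬ · ∈ a.support),
                Φ.chowMk (m (Φ.e r) • MvPolynomial.monomial (Finsupp.single r 1 + a') 1) :=
            eq_neg_of_add_eq_zero_left hJ
          rw [hmain]
          refine Submodule.neg_mem _ (Submodule.sum_mem _ fun r hr => ?_)
          rw [map_smul]
          refine Submodule.smul_mem _ _ ?_
          have hrs : r ∉ a.support := by
            have := Finset.mem_filter.1 hr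
            simpa using this.2
          set b := Finsupp.single r 1 + a' with hb
          have hbsum : (b.sum fun _ e => e) = k := by
            have h1 : (a.sum fun _ e => e)
                = ((Finsupp.single ρ 1 + a').sum fun _ e => e) := by rw [← haeq]
            rw [hb, Finsupp.sum_add_index' (fun _ => rfl) (fun _ _ _ => rfl)] at *
            rw [Finsupp.sum_single_index rfl] at h1 ⊢
            omega
          have hbsupp : b.support = insert r a.support := by
            rw [← hsupp']
            ext t
            rw [Finsupp.mem_support_iff, Finset.mem_insert, Finsupp.mem_support_iff, hb,
              Finsupp.add_apply, Finsupp.single_apply]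
            by_cases h : r = t
            · subst h
              rw [if_pos rfl]
              exact ⟨fun _ => Or.inl rfl, fun _ => by omega⟩
            · rw [if_neg h]
              constructor
              · intro hh; exact Or.inr (by omega)
              · rintro (hh | hh)
                · exact absurd hh.symm h
                · omega
          refine ih b hbsum ?_
          rw [hbsum, hbsupp, Finset.card_insert_of_notMem hrs]
          rw [hsum] at hμ
          omega
        · -- squarefree case, same as base
          push_neg at hsq
          have haeq : a = Φ.sind a.support := by
            ext r
            rw [Φ.sind_apply]
            by_cases h : r ∈ a.support
            · rw [if_pos h]
              have h1 : 1 ≤ a r := Nat.one_le_iff_ne_zero.2 (Finsupp.mem_support_iff.1 h)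
              have h2 := hsq r h
              omega
            · rw [if_neg h]
              exact Finsupp.notMem_support_iff.1 h
          have hcard : a.support.card = k := by
            have : (a.sum fun _ e => e) = a.support.card := by
              rw [Finsupp.sum, Finset.card_eq_sum_ones]
              refine Finset.sum_congr rfl fun r hr => ?_
              have h1 : 1 ≤ a r := Nat.one_le_iff_ne_zero.2 (Finsupp.mem_support_iff.1 hr)
              have h2 := hsq r hr
              omega
            omega
          refine Submodule.subset_span ⟨⟨a.support, hface, hcard⟩, ?_⟩
          show Φ.xcl a.support = Φ.chowMk (MvPolynomial.monomial a 1)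
          rw [xcl, Φ.prod_X_eq, ← haeq]
      · rw [Φ.chowMk_nonface hface]
        exact Submodule.zero_mem _

end UFan
namespace UFan
variable {n : ℕ} (Φ : UFan n)

lemma chowGr_le_span (k : ℕ) : Φ.ChowGr k ≤
    Submodule.span ℤ (Set.range fun σ : Φ.FacesK k => Φ.xcl σ.1) := by
  rintro x ⟨P, hP, rfl⟩
  rw [SetLike.mem_coe, MvPolynomial.mem_homogeneousSubmodule] at hP
  have hexp : (Φ.chowMk).toLinearMap P
      = ∑ a ∈ P.support, Φ.chowMk (MvPolynomial.monomial a (MvPolynomial.coeff a P)) := by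
    conv_lhs => rw [← MvPolynomial.support_sum_monomial_coeff P]
    rw [map_sum]
    rfl
  rw [hexp]
  refine Submodule.sum_mem _ fun a ha => ?_
  have hmono : MvPolynomial.monomial a (MvPolynomial.coeff a P)
      = (MvPolynomial.coeff a P) • MvPolynomial.monomial a (1 : ℤ) := by
    rw [MvPolynomial.smul_monomial, smul_eq_mul, mul_one]
  rw [hmono, map_smul]
  refine Submodule.smul_mem _ _ ?_
  have hdeg : (a.sum fun _ e => e) = k := by
    have h1 := hP (MvPolynomial.mem_support_iff.1 ha)
    rw [Finsupp.weight_apply] at h1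
    rw [← h1]
    exact Finsupp.sum_congr fun i _ => by simp
  exact Φ.chow_monomial_mem k ((a.sum fun _ e => e) - a.support.card) a hdeg le_rfl

lemma sind_insert_support {T : Finset Φ.R} {r : Φ.R} :
    (Finsupp.single r 1 + Φ.sind T).support = insert r T := by
  ext t
  rw [Finsupp.mem_support_iff, Finset.mem_insert, Finsupp.add_apply,
    Finsupp.single_apply, Φ.sind_apply]
  by_cases h1 : r = t
  · subst h1
    rw [if_pos rfl]
    exact ⟨fun _ => Or.inl rfl, fun _ => by omega⟩
  · rw [if_neg h1]
    by_cases h2 : t ∈ T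
    · rw [if_pos h2]
      exact ⟨fun _ => Or.inr h2, fun _ => by omega⟩
    · rw [if_neg h2]
      constructor
      · intro hh; omega
      · rintro (hh | hh)
        · exact absurd hh.symm h1
        · exact absurd hh h2

lemma theta_mem (k : ℕ) (φ : ↥(Φ.ChowGr k) →ₗ[ℤ] ℤ) :
    (fun σ : Φ.FacesK k => φ ⟨Φ.xcl σ.1, Φ.xcl_mem_ChowGr σ.1 k σ.2.2⟩) ∈ Φ.MWsub k := by
  rw [MWsub]
  simp only [Submodule.mem_iInf, LinearMap.mem_ker]
  intro T hT h2
  set w : Φ.FacesK k → ℤ := fun σ => φ ⟨Φ.xcl σ.1, Φ.xcl_mem_ChowGr σ.1 k σ.2.2⟩ with hwdef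
  set x : NZ n := ∑ r : Φ.R, (if hg : r ∉ T ∧ insert r T ∈ Φ.faces then
    w ⟨insert r T, hg.2, by rw [Finset.card_insert_of_notMem hg.1, h2]⟩ • Φ.e r
    else 0) with hx
  have hbal : Φ.balL k T hT h2 w = Φ.qmap T x := by
    rw [balL, LinearMap.sum_apply, hx, map_sum]
    refine Finset.sum_congr rfl fun r _ => ?_
    rw [apply_dite (fun (F : ((Φ.FacesK k) → ℤ) →ₗ[ℤ] Φ.Q T) => F w),
      apply_dite (Φ.qmap T)]
    by_cases hg : r ∉ T ∧ insert r T ∈ Φ.faces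
    · rw [dif_pos hg, dif_pos hg, LinearMap.smulRight_apply, LinearMap.proj_apply, map_smul]
    · rw [dif_neg hg, dif_neg hg, LinearMap.zero_apply, map_zero]
  rw [hbal]
  obtain ⟨hfinj, hf⟩ := (Φ.unimodular T hT).choose_spec.choose_spec
  set b := (Φ.unimodular T hT).choose with hb
  set f := (Φ.unimodular T hT).choose_spec.choose with hfd
  have hxmem : x ∈ Φ.Nsub T := by
    have himg : Φ.e '' (T : Set Φ.R) = ⇑b '' (Set.range f) := by
      ext y
      constructor
      · rintro ⟨t, ht, rfl⟩
        exact ⟨f ⟨t, ht⟩, ⟨⟨t, ht⟩, rfl⟩, hf ⟨t, ht⟩⟩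
      · rintro ⟨i, ⟨t, rfl⟩, rfl⟩
        exact ⟨t.1, t.2, (hf t).symm⟩
    rw [Nsub, himg, Module.Basis.mem_span_image]
    intro i hi
    rw [Finset.mem_coe, Finsupp.mem_support_iff] at hi
    by_contra hir
    apply hi
    set m : NZ n →ₗ[ℤ] ℤ := b.coord i with hmdef
    have hme : ∀ t ∈ T, m (Φ.e t) = 0 := by
      intro t ht
      rw [hmdef, ← hf ⟨t, ht⟩, Module.Basis.coord_apply, Module.Basis.repr_self, Finsupp.single_apply]
      rw [if_neg]
      intro hcon
      exact hir ⟨⟨t, ht⟩, hcon⟩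
    -- the Chow class of ℓ_m * x_T vanishes
    have hzero : Φ.chowMk ((∑ r : Φ.R, m (Φ.e r) • MvPolynomial.X r)
        * ∏ t ∈ T, MvPolynomial.X t) = 0 := by
      rw [chowMk, Ideal.Quotient.mkₐ_eq_mk, Ideal.Quotient.eq_zero_iff_mem]
      exact Submodule.mem_sup_right
        (Ideal.mul_mem_right _ _ (Ideal.subset_span ⟨m, rfl⟩))
    have hexpand : Φ.chowMk ((∑ r : Φ.R, m (Φ.e r) • MvPolynomial.X r)
        * ∏ t ∈ T, MvPolynomial.X t)
        = ∑ r : Φ.R, (if r ∉ T ∧ insert r T ∈ Φ.faces then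
            m (Φ.e r) • Φ.xcl (insert r T) else 0) := by
      rw [Finset.sum_mul, map_sum]
      refine Finset.sum_congr rfl fun r _ => ?_
      rw [smul_mul_assoc, Φ.prod_X_eq,
        show (MvPolynomial.X r : MvPolynomial Φ.R ℤ)
          = MvPolynomial.monomial (Finsupp.single r 1) 1 from rfl,
        MvPolynomial.monomial_mul, one_mul, map_smul]
      by_cases hrT : r ∈ T
      · rw [hme r hrT, zero_smul, zero_smul, if_neg (by tauto)]
      · by_cases hface : insert r T ∈ Φ.faces
        · rw [if_pos ⟨hrT, hface⟩]
          congr 1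
          have hsi : Finsupp.single r 1 + Φ.sind T = Φ.sind (insert r T) := by
            rw [sind, sind, Finset.sum_insert hrT]
          rw [hsi, xcl, Φ.prod_X_eq]
        · rw [if_neg (by tauto), Φ.chowMk_nonface (by
            rw [Φ.sind_insert_support]; exact hface), smul_zero]
    -- the subtype-level sum
    set z : ↥(Φ.ChowGr k) := ∑ r : Φ.R, (if hg : r ∉ T ∧ insert r T ∈ Φ.faces then
      m (Φ.e r) • (⟨Φ.xcl (insert r T), Φ.xcl_mem_ChowGr (insert r T) k
        (by rw [Finset.card_insert_of_notMem hg.1, h2])⟩ : ↥(Φ.ChowGr k))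
      else 0) with hz
    have hzval : (z : Φ.Chow) = ∑ r : Φ.R, (if r ∉ T ∧ insert r T ∈ Φ.faces then
        m (Φ.e r) • Φ.xcl (insert r T) else 0) := by
      rw [hz]
      have := map_sum ((Φ.ChowGr k).subtype) (fun r => (if hg : r ∉ T ∧ insert r T ∈ Φ.faces then
        m (Φ.e r) • (⟨Φ.xcl (insert r T), Φ.xcl_mem_ChowGr (insert r T) k
          (by rw [Finset.card_insert_of_notMem hg.1, h2])⟩ : ↥(Φ.ChowGr k))
        else 0)) Finset.univ
      rw [show ((z : Φ.Chow)) = (Φ.ChowGr k).subtype z from rfl, hz, this]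
      refine Finset.sum_congr rfl fun r _ => ?_
      rw [apply_dite ((Φ.ChowGr k).subtype)]
      by_cases hg : r ∉ T ∧ insert r T ∈ Φ.faces
      · rw [dif_pos hg, if_pos hg, map_smul, Submodule.coe_subtype]
      · rw [dif_neg hg, if_neg hg, map_zero]
    have hz0 : z = 0 := by
      apply Subtype.ext
      rw [hzval, ← hexpand, hzero]
      rfl
    have hφz : φ z = 0 := by rw [hz0, map_zero]
    rw [map_sum] at hφz
    have hterm : ∀ r : Φ.R, φ (if hg : r ∉ T ∧ insert r T ∈ Φ.faces then
        m (Φ.e r) • (⟨Φ.xcl (insert r T), Φ.xcl_mem_ChowGr (insert r T) k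
          (by rw [Finset.card_insert_of_notMem hg.1, h2])⟩ : ↥(Φ.ChowGr k))
        else 0)
        = m (if hg : r ∉ T ∧ insert r T ∈ Φ.faces then
            w ⟨insert r T, hg.2, by rw [Finset.card_insert_of_notMem hg.1, h2]⟩ • Φ.e r
            else 0) := by
      intro r
      rw [apply_dite φ, apply_dite m]
      by_cases hg : r ∉ T ∧ insert r T ∈ Φ.faces
      · rw [dif_pos hg, dif_pos hg, map_smul, lmap_smul, smul_eq_mul, mul_comm]
      · rw [dif_neg hg, dif_neg hg, map_zero, map_zero]
    rw [Finset.sum_congr rfl fun r _ => hterm r, ← map_sum, ← hx] at hφz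
    exact hφz
  rw [qmap, Submodule.mkQ_apply, Submodule.Quotient.mk_eq_zero]
  exact hxmem

end UFan

/-- Let `Φ` be a unimodular fan.  The pairing
`A^k(Φ) ⊗ MW_k(Φ) → ℤ`, `x_σ ⊗ w ↦ w(σ)`, is well defined and induces an
isomorphism `MW_k(Φ) ≅ Hom(A^k(Φ), ℤ)`. -/
theorem chow_minkowski_duality {n : ℕ} (Φ : UFan n) (k : ℕ) :
    ∃ Ψ : ↥(Φ.MWsub k) ≃ₗ[ℤ] (↥(Φ.ChowGr k) →ₗ[ℤ] ℤ),
      ∀ (w : ↥(Φ.MWsub k)) (S : Finset Φ.R) (hS : S ∈ Φ.faces) (hk : S.card = k),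
        Ψ w ⟨Φ.xcl S, Φ.xcl_mem_ChowGr S k hk⟩ = w.1 ⟨S, hS, hk⟩ := by
  classical
  let gens : Φ.FacesK k → ↥(Φ.ChowGr k) :=
    fun σ => ⟨Φ.xcl σ.1, Φ.xcl_mem_ChowGr σ.1 k σ.2.2⟩
  have hspan : ∀ x : ↥(Φ.ChowGr k), x ∈ Submodule.span ℤ (Set.range gens) := by
    intro x
    have h1 : (x : Φ.Chow) ∈ Submodule.span ℤ (Set.range fun σ : Φ.FacesK k => Φ.xcl σ.1) :=
      Φ.chowGr_le_span k x.2
    have h2 : (Set.range fun σ : Φ.FacesK k => Φ.xcl σ.1)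
        = (Φ.ChowGr k).subtype '' (Set.range gens) := by
      rw [← Set.range_comp]
      rfl
    rw [h2, Submodule.span_image] at h1
    obtain ⟨y, hy, hyx⟩ := h1
    have hyx' : y = x := Subtype.ext hyx
    rwa [← hyx']
  let Θ : (↥(Φ.ChowGr k) →ₗ[ℤ] ℤ) →ₗ[ℤ] ↥(Φ.MWsub k) :=
    { toFun := fun φ => ⟨fun σ => φ (gens σ), Φ.theta_mem k φ⟩
      map_add' := fun φ ψ => Subtype.ext rfl
      map_smul' := fun c φ => Subtype.ext rfl }
  have hinj : Function.Injective Θ := by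
    intro φ ψ hφψ
    have hval : ∀ σ, φ (gens σ) = ψ (gens σ) :=
      fun σ => congrFun (congrArg Subtype.val hφψ) σ
    ext x
    refine Submodule.span_induction (p := fun y _ => φ y = ψ y)
      (fun y hy => ?_) (by show φ 0 = ψ 0; rw [map_zero, map_zero])
      (fun y z _ _ hy hz => by show φ (y + z) = ψ (y + z); rw [map_add, map_add]; exact congrArg₂ (· + ·) hy hz)
      (fun c y _ hy => by show φ (c • y) = ψ (c • y); rw [map_smul, map_smul]; exact congrArg (c • ·) hy) (hspan x)
    obtain ⟨σ, rfl⟩ := hy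
    exact hval σ
  have hsurj : Function.Surjective Θ := by
    intro w
    refine ⟨(Φ.lchow k w.1 w.2).comp (Φ.ChowGr k).subtype, ?_⟩
    apply Subtype.ext
    funext σ
    show Φ.lchow k w.1 w.2 (Φ.xcl σ.1) = w.1 σ
    rw [Φ.lchow_xcl k w.1 w.2 σ.2.1 σ.2.2]
  let E := LinearEquiv.ofBijective Θ ⟨hinj, hsurj⟩
  refine ⟨E.symm, ?_⟩
  intro w S hS hk
  have h := E.apply_symm_apply w
  have h2 := congrFun (congrArg Subtype.val h) ⟨S, hS, hk⟩
  exact h2
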